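/- Let G be a topological group, let C ⊆ G be an open subset with 1 ∈ closure(C), and let E ⊆ G be an open subset with E · C ⊆ E. Then E is regularly open: E = interior(closure(E)). -/

import Mathlib

/-- Let `G` be a topological group, `C ⊆ G` an open set with `1 ∈ closure C`, and
`E ⊆ G` an open set with `E · C ⊆ E`. Then `E` is regularly open:
`E = interior (closure E)`. -/
theorem regularlyOpen_of_coneProperty
    {G : Type*} [Group G] [TopologicalSpace G] [IsTopologicalGroup G]
    (C E : Set G) (hCopen : IsOpen C) (hC1 : (1 : G) ∈ closure C)
    (hEopen : IsOpen E) (hEC : ∀ x ∈ E, ∀ c ∈ C, x * c ∈ E) :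
    E = interior (closure E) := by
  -- Key claim: closure E · C ⊆ E
  have key : ∀ y ∈ closure E, ∀ c ∈ C, y * c ∈ E := by
    intro y hy c hc
    -- O := {v : (y⁻¹ * v)⁻¹ * c ∈ C} is an open set containing y
    have hOopen : IsOpen ((fun v : G => (y⁻¹ * v)⁻¹ * c) ⁻¹' C) :=
      hCopen.preimage (by continuity)
    have hyO : y ∈ (fun v : G => (y⁻¹ * v)⁻¹ * c) ⁻¹' C := by
      simp [hc]
    obtain ⟨e, heO, heE⟩ := (mem_closure_iff.mp hy) _ hOopen hyO
    have : e * ((y⁻¹ * e)⁻¹ * c) ∈ E := hEC e heE _ heO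
    have heq : e * ((y⁻¹ * e)⁻¹ * c) = y * c := by group
    rwa [heq] at this
  apply subset_antisymm
  · exact hEopen.subset_interior_iff.mpr subset_closure
  · intro x hx
    -- Find c ∈ C with x * c⁻¹ ∈ interior (closure E)
    have hOopen : IsOpen ((fun g : G => x * g⁻¹) ⁻¹' interior (closure E)) :=
      isOpen_interior.preimage (by continuity)
    have h1 : (1 : G) ∈ (fun g : G => x * g⁻¹) ⁻¹' interior (closure E) := by
      simpa using hx
    obtain ⟨c, hcO, hcC⟩ := (mem_closure_iff.mp hC1) _ hOopen h1
    have : (x * c⁻¹) * c ∈ E := key _ (interior_subset hcO) c hcC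
    simpa using this
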